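/- Let g be the inverse of x ↦ x·tanh(x) on [0,∞) and f(x) = csch²(g(x/2)). Then f(x) ≤ 2/x for all x > 0, i.e., the generalized TUR bound is always looser than the original bound 2/⟨Σ⟩. -/
import Mathlib


open Real

/-- Let `g` be the inverse of `x ↦ x * tanh x` on `[0, ∞)` and
`f x = csch² (g (x/2))`.  Then `f x ≤ 2/x` for all `x > 0`: the generalized TUR
bound is always looser than the original bound `2/⟨Σ⟩`. -/
theorem tur_f_le_two_div_x
    (g : ℝ → ℝ)
    (hg : ∀ x ∈ Set.Ici (0 : ℝ), g x ∈ Set.Ici (0 : ℝ) ∧ g x * Real.tanh (g x) = x)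
    (f : ℝ → ℝ) (hf : ∀ x, f x = (1 / Real.sinh (g (x / 2))) ^ 2) :
    ∀ x > (0 : ℝ), f x ≤ 2 / x := by
  intro x hx
  obtain ⟨ht0, hteq⟩ := hg (x / 2) (Set.mem_Ici.mpr (by positivity))
  set t := g (x / 2) with htdef
  have ht : 0 < t := by
    rcases lt_or_eq_of_le (Set.mem_Ici.mp ht0) with h | h
    · exact h
    · exfalso; rw [← h, zero_mul] at hteq; linarith
  have hsinh : 0 < Real.sinh t := Real.sinh_pos_iff.mpr ht
  have hcosh : (1 : ℝ) ≤ Real.cosh t := Real.one_le_cosh t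
  have hts : t ≤ Real.sinh t := Real.self_le_sinh_iff.mpr ht.le
  have htanh : Real.tanh t = Real.sinh t / Real.cosh t := Real.tanh_eq_sinh_div_cosh t
  have hcosh0 : 0 < Real.cosh t := lt_of_lt_of_le one_pos hcosh
  rw [hf, div_pow, one_pow, div_le_div_iff₀ (by positivity) hx]
  have hxeq : x = 2 * (t * (Real.sinh t / Real.cosh t)) := by rw [← htanh]; linarith
  rw [← htdef]
  have key : t * (Real.sinh t / Real.cosh t) ≤ Real.sinh t ^ 2 := by
    have h1 : t * (Real.sinh t / Real.cosh t) = t * Real.sinh t / Real.cosh t := by ring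
    rw [h1, div_le_iff₀ hcosh0]
    nlinarith [mul_le_mul_of_nonneg_right hts hsinh.le]
  linarith
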